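/- Let μ ∈ ℝ, σ > 0, and α ∈ (0, 1), and set γ := √(α/(1−α)). Let P be the two-point probability measure on ℝ placing mass α at the point μ − σ√((1−α)/α) and mass 1 − α at the point μ + σγ. Then P has mean μ, variance σ², and CVaR_α(P) = μ + γσ, where CVaR_α(P) := inf over z ∈ ℝ of ( z + (1/(1−α)) ∫ max(x − z, 0) dP(x) ). -/

import Mathlib

open MeasureTheory

/-- The conditional value at risk of a probability measure `P` on `ℝ` at level `α`:
`CVaR_α(P) = inf_{z ∈ ℝ} ( z + (1/(1−α)) ∫ max(x − z, 0) dP(x) )`. -/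
noncomputable def cvar (α : ℝ) (P : MeasureTheory.Measure ℝ) : ℝ :=
  ⨅ z : ℝ, (z + (1 / (1 - α)) * ∫ x, max (x - z) 0 ∂P)

/-- Tightness of the worst-case CVaR bound over the Chebyshev ambiguity set: for
`μ ∈ ℝ`, `σ > 0`, `α ∈ (0, 1)` and `γ = √(α/(1−α))`, the two-point measure placing mass
`α` at `μ − σ√((1−α)/α)` and mass `1 − α` at `μ + σγ` is a probability measure with
mean `μ`, variance `σ²`, and `CVaR_α = μ + γσ`. -/
theorem cvar_two_point_attains
    (μ σ α : ℝ) (hσ : 0 < σ) (hα : α ∈ Set.Ioo (0 : ℝ) 1)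
    (γ : ℝ) (hγ : γ = Real.sqrt (α / (1 - α)))
    (P : Measure ℝ)
    (hP : P = ENNReal.ofReal α • Measure.dirac (μ - σ * Real.sqrt ((1 - α) / α))
      + ENNReal.ofReal (1 - α) • Measure.dirac (μ + σ * γ)) :
    IsProbabilityMeasure P ∧
      (∫ x, x ∂P) = μ ∧
      (∫ x, (x - μ) ^ 2 ∂P) = σ ^ 2 ∧
      cvar α P = μ + γ * σ := by
  obtain ⟨hα0, hα1⟩ := hα
  have h1α : (0:ℝ) < 1 - α := by linarith
  set s : ℝ := Real.sqrt ((1 - α) / α) with hs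
  set a : ℝ := μ - σ * s with ha
  set b : ℝ := μ + σ * γ with hb
  have hs0 : 0 ≤ s := Real.sqrt_nonneg _
  have hγ0 : 0 ≤ γ := hγ ▸ Real.sqrt_nonneg _
  have hs2 : s ^ 2 = (1 - α) / α := Real.sq_sqrt (by positivity)
  have hγ2 : γ ^ 2 = α / (1 - α) := hγ ▸ Real.sq_sqrt (by positivity)
  have hbal : α * s = (1 - α) * γ := by
    have h1 : α * s = Real.sqrt (α * (1 - α)) := by
      rw [hs, ← Real.sqrt_sq hα0.le, ← Real.sqrt_mul (by positivity)]
      congr 1; field_simp; rw [Real.sqrt_sq hα0.le]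
    have h2 : (1 - α) * γ = Real.sqrt (α * (1 - α)) := by
      rw [hγ, ← Real.sqrt_sq h1α.le, ← Real.sqrt_mul (by positivity)]
      congr 1; field_simp; rw [Real.sq_sqrt (by nlinarith [sq_nonneg (1 - α)])]
    rw [h1, h2]
  -- integration lemma
  have key : ∀ f : ℝ → ℝ, ∫ x, f x ∂P = α * f a + (1 - α) * f b := by
    intro f
    have hint : ∀ c : ℝ, Integrable f (Measure.dirac c) :=
      fun c => (integrable_const (f c)).congr (ae_eq_dirac f).symm
    rw [hP, integral_add_measure
        ((hint _).smul_measure ENNReal.ofReal_ne_top)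
        ((hint _).smul_measure ENNReal.ofReal_ne_top),
      integral_smul_measure, integral_smul_measure, integral_dirac, integral_dirac,
      ENNReal.toReal_ofReal hα0.le, ENNReal.toReal_ofReal h1α.le]
    simp [smul_eq_mul]
  have hprob : IsProbabilityMeasure P := by
    constructor
    rw [hP]
    simp [Measure.add_apply, Measure.smul_apply, Measure.dirac_apply, smul_eq_mul,
      ← ENNReal.ofReal_add hα0.le h1α.le]
  have hmean : (∫ x, x ∂P) = μ := by
    have hm : ∫ x, x ∂P = α * a + (1 - α) * b := key (fun x => x)
    rw [hm, ha, hb]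
    nlinarith [hbal]
  have hvar : (∫ x, (x - μ) ^ 2 ∂P) = σ ^ 2 := by
    rw [key (fun x => (x - μ) ^ 2)]
    have : (a - μ) ^ 2 = σ ^ 2 * s ^ 2 := by rw [ha]; ring
    have hb2 : (b - μ) ^ 2 = σ ^ 2 * γ ^ 2 := by rw [hb]; ring
    rw [this, hb2, hs2, hγ2]
    field_simp
    ring
  refine ⟨hprob, hmean, hvar, ?_⟩
  have heval : ∀ z : ℝ, z + (1 / (1 - α)) * ∫ x, max (x - z) 0 ∂P
      = z + (1 / (1 - α)) * (α * max (a - z) 0 + (1 - α) * max (b - z) 0) := by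
    intro z; rw [key (fun x => max (x - z) 0)]
  have hab : a ≤ b := by nlinarith
  have hlb : ∀ z : ℝ, b ≤ z + (1 / (1 - α)) * (α * max (a - z) 0 + (1 - α) * max (b - z) 0) := by
    intro z
    have h1 : (0:ℝ) ≤ max (a - z) 0 := le_max_right _ _
    have h2 : b - z ≤ max (b - z) 0 := le_max_left _ _
    have h3 : (0:ℝ) ≤ max (b - z) 0 := le_max_right _ _
    have e : (1 / (1 - α)) * ((1 - α) * max (b - z) 0) = max (b - z) 0 := by field_simp
    have hM : (1 / (1 - α)) * ((1 - α) * max (b - z) 0)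
        ≤ (1 / (1 - α)) * (α * max (a - z) 0 + (1 - α) * max (b - z) 0) :=
      mul_le_mul_of_nonneg_left (by nlinarith) (by positivity)
    linarith
  have hfb : b + (1 / (1 - α)) * (α * max (a - b) 0 + (1 - α) * max (b - b) 0) = b := by
    rw [max_eq_right (by linarith : a - b ≤ 0), sub_self, max_self, mul_zero, mul_zero,
      add_zero, mul_zero, add_zero]
  have : cvar α P = b := by
    unfold cvar
    simp only [heval]
    apply le_antisymm
    · exact le_of_le_of_eq (ciInf_le ⟨b, fun x ⟨z, hz⟩ => hz ▸ hlb z⟩ b) hfb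
    · exact le_ciInf hlb
  rw [this, hb]; ring
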